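/- Let C ⊆ Mat_{n×m}(F_q) be an F_q-linear rank-metric code and let C^⊥ be its dual under the trace bilinear form. Then d_min(C) ≤ maxrk(C^⊥) + 1. -/

import Mathlib

open Matrix

section Aux

variable {Fq : Type*} [Field Fq] {n m : ℕ}

lemma traceForm_eq (M N : Matrix (Fin n) (Fin m) Fq) :
    Matrix.trace (M * Nᵀ) = ∑ i, ∑ j, M i j * N i j := by
  simp [Matrix.trace, Matrix.mul_apply, Matrix.diag]

lemma traceForm_comm (M N : Matrix (Fin n) (Fin m) Fq) :
    Matrix.trace (M * Nᵀ) = Matrix.trace (N * Mᵀ) := by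
  rw [traceForm_eq, traceForm_eq]
  simp [mul_comm]

lemma traceForm_single (M : Matrix (Fin n) (Fin m) Fq) (i : Fin n) (j : Fin m) :
    Matrix.trace (M * (Matrix.of fun a b => if a = i ∧ b = j then (1:Fq) else 0)ᵀ) = M i j := by
  rw [traceForm_eq]
  simp [ite_and, Finset.sum_ite_eq', mul_ite]

/-- The trace bilinear form as a map to the dual. -/
noncomputable def eLin : Matrix (Fin n) (Fin m) Fq →ₗ[Fq] Module.Dual Fq (Matrix (Fin n) (Fin m) Fq) :=
  LinearMap.mk₂ Fq (fun M N => Matrix.trace (M * Nᵀ))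
    (by intros; simp [Matrix.add_mul])
    (by intros; simp [Matrix.smul_mul])
    (by intros; simp [Matrix.transpose_add, Matrix.mul_add])
    (by intros; simp [Matrix.transpose_smul, Matrix.mul_smul])

@[simp] lemma eLin_apply (M N : Matrix (Fin n) (Fin m) Fq) :
    eLin M N = Matrix.trace (M * Nᵀ) := rfl

lemma eLin_injective : Function.Injective (eLin (Fq := Fq) (n := n) (m := m)) := by
  rw [← LinearMap.ker_eq_bot, eq_bot_iff]
  intro M hM
  have : ∀ i j, M i j = 0 := by
    intro i j
    have h := LinearMap.congr_fun (LinearMap.mem_ker.mp hM)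
      (Matrix.of fun a b => if a = i ∧ b = j then (1:Fq) else 0)
    simpa [traceForm_single] using h
  ext i j
  exact this i j

lemma eLin_surjective : Function.Surjective (eLin (Fq := Fq) (n := n) (m := m)) :=
  (LinearMap.injective_iff_surjective_of_finrank_eq_finrank
    Subspace.dual_finrank_eq.symm).mp eLin_injective

end Aux

open scoped Classical in
/-- Minimum distance of a matrix rank-metric code. -/
noncomputable def dminMat {Fq : Type*} [Field Fq] {n m : ℕ}
    (C : Submodule Fq (Matrix (Fin n) (Fin m) Fq)) : ℕ :=
  if C = ⊥ then min m n + 1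
  else sInf {r : ℕ | ∃ M ∈ C, M ≠ 0 ∧ M.rank = r}

/-- Maximum rank of a matrix rank-metric code. -/
noncomputable def maxrkMat {Fq : Type*} [Field Fq] {n m : ℕ}
    (C : Submodule Fq (Matrix (Fin n) (Fin m) Fq)) : ℕ :=
  sSup {r : ℕ | ∃ M ∈ C, M.rank = r}

/-- The dual of a matrix rank-metric code under the trace bilinear form
`(M, N) ↦ tr (M * Nᵀ)`. -/
def dualMat {Fq : Type*} [Field Fq] {n m : ℕ}
    (C : Submodule Fq (Matrix (Fin n) (Fin m) Fq)) :
    Submodule Fq (Matrix (Fin n) (Fin m) Fq) where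
  carrier := {M | ∀ N ∈ C, Matrix.trace (M * Nᵀ) = 0}
  add_mem' := fun {a b} ha hb N hN => by
    simp [Matrix.add_mul, ha N hN, hb N hN]
  zero_mem' := fun N hN => by simp
  smul_mem' := fun c a ha N hN => by
    simp [Matrix.smul_mul, ha N hN]

section Dual

variable {Fq : Type*} [Field Fq] {n m : ℕ}

lemma mem_dualMat {X : Submodule Fq (Matrix (Fin n) (Fin m) Fq)}
    {M : Matrix (Fin n) (Fin m) Fq} :
    M ∈ dualMat X ↔ ∀ N ∈ X, Matrix.trace (M * Nᵀ) = 0 := Iff.rfl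

lemma dualMat_eq_comap (X : Submodule Fq (Matrix (Fin n) (Fin m) Fq)) :
    dualMat X = X.dualAnnihilator.comap eLin := by
  ext M
  simp [mem_dualMat, Submodule.mem_comap, Submodule.mem_dualAnnihilator]

lemma dualMat_dualMat (X : Submodule Fq (Matrix (Fin n) (Fin m) Fq)) :
    dualMat (dualMat X) = X := by
  have h1 : (dualMat X).map eLin = X.dualAnnihilator := by
    rw [dualMat_eq_comap, Submodule.map_comap_eq_of_surjective eLin_surjective]
  have h2 : dualMat (dualMat X) = Submodule.dualCoannihilator ((dualMat X).map eLin) := by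
    ext M
    rw [mem_dualMat, Submodule.mem_dualCoannihilator]
    constructor
    · rintro h φ ⟨N, hN, rfl⟩
      rw [eLin_apply, ← traceForm_comm]
      exact h N hN
    · intro h N hN
      have := h (eLin N) ⟨N, hN, rfl⟩
      rw [eLin_apply, ← traceForm_comm] at this
      exact this
  rw [h2, h1, Subspace.dualAnnihilator_dualCoannihilator_eq]

lemma dualMat_bot : dualMat (⊥ : Submodule Fq (Matrix (Fin n) (Fin m) Fq)) = ⊤ := by
  ext M
  simp [mem_dualMat]

lemma dualMat_anti {X Y : Submodule Fq (Matrix (Fin n) (Fin m) Fq)} (h : X ≤ Y) :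
    dualMat Y ≤ dualMat X := fun M hM N hN => hM N (h hN)

end Dual

section Rows

variable {Fq : Type*} [Field Fq] {n m : ℕ}

/-- Matrices supported on the first `t` rows. -/
def lowRows (Fq : Type*) [Field Fq] (n m t : ℕ) :
    Submodule Fq (Matrix (Fin n) (Fin m) Fq) where
  carrier := {M | ∀ (i : Fin n) (j : Fin m), t ≤ (i : ℕ) → M i j = 0}
  add_mem' := fun ha hb i j hi => by simp [Matrix.add_apply, ha i j hi, hb i j hi]
  zero_mem' := fun i j hi => rfl
  smul_mem' := fun c a ha i j hi => by simp [Matrix.smul_apply, ha i j hi]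

/-- Matrices vanishing on the first `t` rows. -/
def highRows (Fq : Type*) [Field Fq] (n m t : ℕ) :
    Submodule Fq (Matrix (Fin n) (Fin m) Fq) where
  carrier := {M | ∀ (i : Fin n) (j : Fin m), (i : ℕ) < t → M i j = 0}
  add_mem' := fun ha hb i j hi => by simp [Matrix.add_apply, ha i j hi, hb i j hi]
  zero_mem' := fun i j hi => rfl
  smul_mem' := fun c a ha i j hi => by simp [Matrix.smul_apply, ha i j hi]

lemma dualMat_highRows_le (t : ℕ) :
    dualMat (highRows Fq n m t) ≤ lowRows Fq n m t := by
  intro M hM i j hi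
  have hmem : (Matrix.of fun a b => if a = i ∧ b = j then (1:Fq) else 0) ∈ highRows Fq n m t := by
    intro a b ha
    have : ¬(a = i ∧ b = j) := by
      rintro ⟨rfl, rfl⟩; omega
    simp [this]
  have := hM _ hmem
  rwa [traceForm_single] at this

lemma rank_le_of_lowRows {t : ℕ} (ht : t ≤ n) {M : Matrix (Fin n) (Fin m) Fq}
    (h : M ∈ lowRows Fq n m t) : M.rank ≤ t := by
  set P : Matrix (Fin n) (Fin t) Fq := Matrix.of fun i k => if (i : ℕ) = (k : ℕ) then 1 else 0
  set Q : Matrix (Fin t) (Fin m) Fq := Matrix.of fun k j => M (Fin.castLE ht k) j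
  have hPQ : P * Q = M := by
    ext i j
    rw [Matrix.mul_apply]
    by_cases hi : (i : ℕ) < t
    · rw [Finset.sum_eq_single (⟨(i : ℕ), hi⟩ : Fin t)]
      · have : Fin.castLE ht ⟨(i : ℕ), hi⟩ = i := by ext; rfl
        simp [P, Q, this]
      · intro k _ hk
        have : (i : ℕ) ≠ (k : ℕ) := fun hc => hk (by ext; exact hc.symm)
        simp [P, Q, this]
      · intro hmem; exact absurd (Finset.mem_univ _) hmem
    · rw [h i j (by omega), Finset.sum_eq_zero]
      intro k _
      have : (i : ℕ) ≠ (k : ℕ) := by omega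
      simp [P, Q, this]
  calc M.rank = (P * Q).rank := by rw [hPQ]
    _ ≤ Q.rank := Matrix.rank_mul_le_right P Q
    _ ≤ Fintype.card (Fin t) := Q.rank_le_card_height
    _ = t := Fintype.card_fin t

lemma rank_ge_of_id_block {t : ℕ} (htn : t ≤ n) (htm : t ≤ m)
    {E : Matrix (Fin n) (Fin m) Fq}
    (h : ∀ (i : Fin n) (j : Fin m), (i : ℕ) < t → E i j = if (i : ℕ) = (j : ℕ) then 1 else 0) :
    t ≤ E.rank := by
  set P : Matrix (Fin t) (Fin n) Fq := Matrix.of fun k i => if (k : ℕ) = (i : ℕ) then 1 else 0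
  set S : Matrix (Fin m) (Fin t) Fq := Matrix.of fun j l => if (j : ℕ) = (l : ℕ) then 1 else 0
  have hPE : ∀ (k : Fin t) (j : Fin m), (P * E) k j = if (k : ℕ) = (j : ℕ) then 1 else 0 := by
    intro k j
    rw [Matrix.mul_apply]
    rw [Finset.sum_eq_single (Fin.castLE htn k)]
    · have hcast : ((Fin.castLE htn k : Fin n) : ℕ) = (k : ℕ) := rfl
      rw [h (Fin.castLE htn k) j (by omega)]
      simp [P, hcast]
    · intro i _ hik
      have : (k : ℕ) ≠ (i : ℕ) := fun hc => hik (by ext; exact hc.symm)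
      simp [P, this]
    · intro hmem; exact absurd (Finset.mem_univ _) hmem
  have hPES : P * E * S = (1 : Matrix (Fin t) (Fin t) Fq) := by
    ext k l
    rw [Matrix.mul_apply]
    rw [Finset.sum_eq_single (Fin.castLE htm k)]
    · have h1 : ((Fin.castLE htm k : Fin m) : ℕ) = (k : ℕ) := rfl
      rw [hPE]
      simp only [h1, S, Matrix.of_apply, if_pos rfl, one_mul]
      by_cases hkl : k = l
      · simp [hkl, Matrix.one_apply]
      · have : (k : ℕ) ≠ (l : ℕ) := fun hc => hkl (by ext; exact hc)
        simp [this, Matrix.one_apply, hkl]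
    · intro j _ hj
      by_cases hkj : (k : ℕ) = (j : ℕ)
      · exact absurd (by ext; exact hkj.symm) hj
      · rw [hPE]; simp [hkj]
    · intro hmem; exact absurd (Finset.mem_univ _) hmem
  calc t = Fintype.card (Fin t) := (Fintype.card_fin t).symm
    _ = (1 : Matrix (Fin t) (Fin t) Fq).rank := Matrix.rank_one.symm
    _ = (P * E * S).rank := by rw [hPES]
    _ ≤ (P * E).rank := Matrix.rank_mul_le_left _ _
    _ ≤ E.rank := Matrix.rank_mul_le_right _ _

end Rows

/-- `d_min(C) ≤ maxrk(C^⊥) + 1`. -/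
theorem stmt16 {Fq : Type*} [Field Fq] [Fintype Fq] {n m : ℕ} (hn : 0 < n) (hm : 0 < m)
    (C : Submodule Fq (Matrix (Fin n) (Fin m) Fq)) :
    dminMat C ≤ maxrkMat (dualMat C) + 1 := by
  set t := maxrkMat (dualMat C) with ht
  have hbdd : BddAbove {r : ℕ | ∃ M ∈ dualMat C, M.rank = r} := by
    refine ⟨n, ?_⟩
    rintro r ⟨M, _, rfl⟩
    simpa using M.rank_le_card_height
  have rank_le_min : ∀ M : Matrix (Fin n) (Fin m) Fq, M.rank ≤ min m n := fun M =>
    le_min (by simpa using M.rank_le_card_width) (by simpa using M.rank_le_card_height)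
  by_cases hcase : min m n ≤ t
  · by_cases hC : C = ⊥
    · rw [dminMat, if_pos hC]; omega
    · rw [dminMat, if_neg hC]
      obtain ⟨M, hM, hM0⟩ := Submodule.exists_mem_ne_zero_of_ne_bot hC
      have h1 : sInf {r : ℕ | ∃ M ∈ C, M ≠ 0 ∧ M.rank = r} ≤ M.rank :=
        Nat.sInf_le ⟨M, hM, hM0, rfl⟩
      have h2 := rank_le_min M
      omega
  · push_neg at hcase
    have htm : t + 1 ≤ m := by omega
    have htn : t + 1 ≤ n := by omega
    have key : C ⊓ lowRows Fq n m (t + 1) ≠ ⊥ := by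
      intro hbot
      have h1 : dualMat (dualMat C ⊔ highRows Fq n m (t + 1)) = ⊥ := by
        rw [eq_bot_iff, ← hbot]
        intro M hM
        refine Submodule.mem_inf.mpr ⟨?_, ?_⟩
        · have h2 := dualMat_anti (le_sup_left : dualMat C ≤ _) hM
          rwa [dualMat_dualMat] at h2
        · exact dualMat_highRows_le (t + 1) (dualMat_anti le_sup_right hM)
      have hsup : dualMat C ⊔ highRows Fq n m (t + 1) = ⊤ := by
        have h2 := congrArg dualMat h1
        rwa [dualMat_dualMat, dualMat_bot] at h2
      set A : Matrix (Fin n) (Fin m) Fq :=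
        Matrix.of fun i j => if (i : ℕ) = (j : ℕ) ∧ (i : ℕ) < t + 1 then 1 else 0 with hA
      have hAmem : A ∈ dualMat C ⊔ highRows Fq n m (t + 1) := hsup ▸ Submodule.mem_top
      obtain ⟨E, hE, w, hw, hEw⟩ := Submodule.mem_sup.mp hAmem
      have hErow : ∀ (i : Fin n) (j : Fin m), (i : ℕ) < t + 1 →
          E i j = if (i : ℕ) = (j : ℕ) then 1 else 0 := by
        intro i j hi
        have h2 : E i j + w i j = A i j := congrFun (congrFun hEw i) j
        rw [hw i j hi, add_zero] at h2
        rw [h2, hA]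
        simp [hi, show (i : ℕ) ≤ t by omega]
      have hge := rank_ge_of_id_block htn htm hErow
      have hle : E.rank ≤ t := by
        rw [ht]
        exact le_csSup hbdd ⟨E, hE, rfl⟩
      omega
    obtain ⟨M, hM, hM0⟩ := Submodule.exists_mem_ne_zero_of_ne_bot key
    have hMC : M ∈ C := (Submodule.mem_inf.mp hM).1
    have hrank : M.rank ≤ t + 1 := rank_le_of_lowRows htn (Submodule.mem_inf.mp hM).2
    have hC : C ≠ ⊥ := by
      intro h
      rw [h] at hMC
      exact hM0 hMC
    rw [dminMat, if_neg hC]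
    have h3 : sInf {r : ℕ | ∃ M ∈ C, M ≠ 0 ∧ M.rank = r} ≤ M.rank :=
      Nat.sInf_le ⟨M, hMC, hM0, rfl⟩
    omega
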